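/- arXiv:2405.18684 — 2 statements merged into one kernel-verified Lean document; each statement's English description precedes it below -/
import Mathlib

section
/- For every n ≥ 1 and every pair of distinct grid points p, q ∈ Aₙ with p ≠ q, there exists a level-n expansion list L ∈ Ex(n, 0) and an index i such that L has p at position i and q at position i+1; that is, the factors indexed by p and q appear next to each other in at least one of the possible level-n expansions of 0. -/
/-- One-step expansion of a list: each entry `x` is replaced by the two entries
`(x+1)/2` and `(x-1)/2`, placed in either order. -/
inductive ExpandStep : List ℚ → List ℚ → Prop
  | nil : ExpandStep [] []
  | cons_lr (x : ℚ) {L L' : List ℚ} (h : ExpandStep L L') :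
      ExpandStep (x :: L) ((x + 1) / 2 :: (x - 1) / 2 :: L')
  | cons_rl (x : ℚ) {L L' : List ℚ} (h : ExpandStep L L') :
      ExpandStep (x :: L) ((x - 1) / 2 :: (x + 1) / 2 :: L')

/-- `ExpandN n L L'` : `L'` is obtained from `L` by `n` successive one-step
expansions. -/
inductive ExpandN : ℕ → List ℚ → List ℚ → Prop
  | zero (L : List ℚ) : ExpandN 0 L L
  | succ {n : ℕ} {L L' L'' : List ℚ} (h : ExpandN n L L') (h' : ExpandStep L' L'') :
      ExpandN (n + 1) L L''

/-- `Ex n s`: the set of lists obtainable from the singleton list `[s]` by `n`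
successive one-step expansions (the leaf-orderings at level `n` of the binary
expansion tree). -/
def Ex (n : ℕ) (s : ℚ) : Set (List ℚ) := {L | ExpandN n [s] L}

/-- The dyadic grid `Aₙ = {(2m+1)/2ⁿ : m ∈ ℤ, |2m+1| < 2ⁿ} ⊂ (−1,1)`. -/
def dyadicGrid (n : ℕ) : Set ℚ :=
  {x | ∃ m : ℤ, |2 * m + 1| < 2 ^ n ∧ x = (2 * (m : ℚ) + 1) / 2 ^ n}

/-! ### Auxiliary lemmas -/

lemma expandStep_append {L M L' M' : List ℚ} (h : ExpandStep L M) (h' : ExpandStep L' M') :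
    ExpandStep (L ++ L') (M ++ M') := by
  induction h with
  | nil => simpa
  | cons_lr x h ih => exact ExpandStep.cons_lr x ih
  | cons_rl x h ih => exact ExpandStep.cons_rl x ih

lemma expandN_append : ∀ {n : ℕ} {L M L' M' : List ℚ},
    ExpandN n L M → ExpandN n L' M' → ExpandN n (L ++ L') (M ++ M') := by
  intro n
  induction n with
  | zero =>
    intro L M L' M' h h'
    cases h; cases h'
    exact ExpandN.zero _
  | succ n ih =>
    intro L M L' M' h h'
    cases h with
    | succ h1 h2 =>
      cases h' with
      | succ h1' h2' => exact ExpandN.succ (ih h1 h1') (expandStep_append h2 h2')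

lemma expandN_of_step {n : ℕ} {L L' L'' : List ℚ}
    (h : ExpandStep L L') (h' : ExpandN n L' L'') : ExpandN (n + 1) L L'' := by
  induction h' with
  | zero => exact ExpandN.succ (ExpandN.zero _) h
  | succ h1 h2 ih => exact ExpandN.succ (ih h) h2

lemma ex_nonempty : ∀ (n : ℕ) (s : ℚ), ∃ L, ExpandN n [s] L := by
  intro n
  induction n with
  | zero => intro s; exact ⟨[s], ExpandN.zero _⟩
  | succ n ih =>
    intro s
    obtain ⟨A, hA⟩ := ih ((s + 1) / 2)
    obtain ⟨B, hB⟩ := ih ((s - 1) / 2)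
    exact ⟨A ++ B, expandN_of_step (ExpandStep.cons_lr s ExpandStep.nil)
      (expandN_append hA hB)⟩

/-- The values appearing at depth `n` of the expansion tree rooted at `s`. -/
inductive IsLeaf : ℕ → ℚ → ℚ → Prop
  | zero (s : ℚ) : IsLeaf 0 s s
  | left {n : ℕ} {s p : ℚ} (h : IsLeaf n ((s + 1) / 2) p) : IsLeaf (n + 1) s p
  | right {n : ℕ} {s p : ℚ} (h : IsLeaf n ((s - 1) / 2) p) : IsLeaf (n + 1) s p

/-- Any leaf can be made the first entry of some expansion. -/
lemma exists_head {n : ℕ} {s p : ℚ} (h : IsLeaf n s p) :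
    ∃ L, ExpandN n [s] (p :: L) := by
  induction h with
  | zero s => exact ⟨[], ExpandN.zero _⟩
  | @left n s p h ih =>
    obtain ⟨A, hA⟩ := ih
    obtain ⟨B, hB⟩ := ex_nonempty n ((s - 1) / 2)
    exact ⟨A ++ B, expandN_of_step (ExpandStep.cons_lr s ExpandStep.nil)
      (expandN_append hA hB)⟩
  | @right n s p h ih =>
    obtain ⟨A, hA⟩ := ih
    obtain ⟨B, hB⟩ := ex_nonempty n ((s + 1) / 2)
    exact ⟨A ++ B, expandN_of_step (ExpandStep.cons_rl s ExpandStep.nil)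
      (expandN_append hA hB)⟩

/-- Any leaf can be made the last entry of some expansion. -/
lemma exists_last {n : ℕ} {s p : ℚ} (h : IsLeaf n s p) :
    ∃ L, ExpandN n [s] (L ++ [p]) := by
  induction h with
  | zero s => exact ⟨[], ExpandN.zero _⟩
  | @left n s p h ih =>
    obtain ⟨A, hA⟩ := ih
    obtain ⟨B, hB⟩ := ex_nonempty n ((s - 1) / 2)
    refine ⟨B ++ A, ?_⟩
    have := expandN_of_step (ExpandStep.cons_rl s ExpandStep.nil)
      (expandN_append hB hA)
    simpa using this
  | @right n s p h ih =>
    obtain ⟨A, hA⟩ := ih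
    obtain ⟨B, hB⟩ := ex_nonempty n ((s + 1) / 2)
    refine ⟨B ++ A, ?_⟩
    have := expandN_of_step (ExpandStep.cons_lr s ExpandStep.nil)
      (expandN_append hB hA)
    simpa using this

/-- Any two distinct leaves can be made adjacent in some expansion. -/
lemma exists_adj : ∀ (n : ℕ) (s p q : ℚ), IsLeaf n s p → IsLeaf n s q → p ≠ q →
    ∃ A B, ExpandN n [s] (A ++ p :: q :: B) := by
  intro n
  induction n with
  | zero =>
    intro s p q hp hq hpq
    cases hp; cases hq; exact absurd rfl hpq
  | succ n ih =>
    intro s p q hp hq hpq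
    cases hp with
    | @left _ _ _ hp' =>
      cases hq with
      | @left _ _ _ hq' =>
        obtain ⟨A, B, hAB⟩ := ih _ _ _ hp' hq' hpq
        obtain ⟨C, hC⟩ := ex_nonempty n ((s - 1) / 2)
        refine ⟨A, B ++ C, ?_⟩
        have := expandN_of_step (ExpandStep.cons_lr s ExpandStep.nil)
          (expandN_append hAB hC)
        simpa using this
      | @right _ _ _ hq' =>
        obtain ⟨A, hA⟩ := exists_last hp'
        obtain ⟨B, hB⟩ := exists_head hq'
        refine ⟨A, B, ?_⟩
        have := expandN_of_step (ExpandStep.cons_lr s ExpandStep.nil)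
          (expandN_append hA hB)
        simpa using this
    | @right _ _ _ hp' =>
      cases hq with
      | @left _ _ _ hq' =>
        obtain ⟨A, hA⟩ := exists_last hp'
        obtain ⟨B, hB⟩ := exists_head hq'
        refine ⟨A, B, ?_⟩
        have := expandN_of_step (ExpandStep.cons_rl s ExpandStep.nil)
          (expandN_append hA hB)
        simpa using this
      | @right _ _ _ hq' =>
        obtain ⟨A, B, hAB⟩ := ih _ _ _ hp' hq' hpq
        obtain ⟨C, hC⟩ := ex_nonempty n ((s + 1) / 2)
        refine ⟨A, B ++ C, ?_⟩
        have := expandN_of_step (ExpandStep.cons_rl s ExpandStep.nil)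
          (expandN_append hAB hC)
        simpa using this

/-- Every grid value `(s + k)/2^n` with `k` odd, `|k| < 2^n` is a leaf at depth `n`. -/
lemma isLeaf_of_odd : ∀ (n : ℕ), 1 ≤ n → ∀ (s : ℚ) (k : ℤ), Odd k → |k| < 2 ^ n →
    IsLeaf n s ((s + (k : ℚ)) / 2 ^ n) := by
  intro n
  induction n with
  | zero => intro h; omega
  | succ n ih =>
    intro _ s k hk hbound
    obtain ⟨t, rfl⟩ := hk
    rcases Nat.eq_zero_or_pos n with rfl | hn
    · -- depth 1 : k = ±1
      have ht : t = 0 ∨ t = -1 := by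
        rw [abs_lt] at hbound
        omega
      rcases ht with rfl | rfl
      · have heq : (s + ((2 * (0:ℤ) + 1 : ℤ) : ℚ)) / 2 ^ 1 = (s + 1) / 2 := by
          push_cast; ring
        rw [heq]
        exact IsLeaf.left (IsLeaf.zero _)
      · have heq : (s + ((2 * (-1:ℤ) + 1 : ℤ) : ℚ)) / 2 ^ 1 = (s - 1) / 2 := by
          push_cast; ring
        rw [heq]
        exact IsLeaf.right (IsLeaf.zero _)
    · have h2 : (2:ℤ) ∣ 2 ^ n := dvd_pow_self 2 hn.ne'
      obtain ⟨c, hc⟩ := h2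
      have hpow : (2:ℤ) ^ (n + 1) = 2 * 2 ^ n := by ring
      rw [abs_lt, hpow, hc] at hbound
      rcases Int.even_or_odd t with ⟨u, rfl⟩ | ⟨u, rfl⟩
      · -- t = u + u even, use right child with k' = 2u+1
        have hb : |(2 * u + 1 : ℤ)| < 2 ^ n := by
          rw [abs_lt, hc]; omega
        have hih := ih hn ((s - 1) / 2) (2 * u + 1) ⟨u, by ring⟩ hb
        have heq : ((s - 1) / 2 + ((2 * u + 1 : ℤ) : ℚ)) / 2 ^ n
            = (s + ((2 * (u + u) + 1 : ℤ) : ℚ)) / 2 ^ (n + 1) := by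
          push_cast
          rw [pow_succ]
          field_simp
          ring
        rw [heq] at hih
        exact IsLeaf.right hih
      · -- t = 2u+1 odd, use left child with k' = 2u+1
        have hb : |(2 * u + 1 : ℤ)| < 2 ^ n := by
          rw [abs_lt, hc]; omega
        have hih := ih hn ((s + 1) / 2) (2 * u + 1) ⟨u, by ring⟩ hb
        have heq : ((s + 1) / 2 + ((2 * u + 1 : ℤ) : ℚ)) / 2 ^ n
            = (s + ((2 * (2 * u + 1) + 1 : ℤ) : ℚ)) / 2 ^ (n + 1) := by
          push_cast
          rw [pow_succ]
          field_simp
          ring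
        rw [heq] at hih
        exact IsLeaf.left hih

lemma mem_dyadicGrid_isLeaf {n : ℕ} (hn : 1 ≤ n) {p : ℚ} (hp : p ∈ dyadicGrid n) :
    IsLeaf n 0 p := by
  obtain ⟨m, hm, rfl⟩ := hp
  have := isLeaf_of_odd n hn 0 (2 * m + 1) ⟨m, by ring⟩ hm
  have heq : ((0:ℚ) + ((2 * m + 1 : ℤ) : ℚ)) / 2 ^ n = (2 * (m:ℚ) + 1) / 2 ^ n := by
    push_cast; ring
  rwa [heq] at this

/-- **Lemma 2.** For every `n ≥ 1` and distinct grid points `p, q ∈ Aₙ`, there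
is a level-`n` expansion list `L ∈ Ex n 0` in which the factors indexed by `p`
and `q` appear next to each other (at positions `i` and `i+1`). -/
theorem adjacent_in_some_expansion :
    ∀ n : ℕ, 1 ≤ n → ∀ p ∈ dyadicGrid n, ∀ q ∈ dyadicGrid n, p ≠ q →
      ∃ L ∈ Ex n 0, ∃ i : ℕ, L[i]? = some p ∧ L[i + 1]? = some q := by
  intro n hn p hp q hq hpq
  have hp' := mem_dyadicGrid_isLeaf hn hp
  have hq' := mem_dyadicGrid_isLeaf hn hq
  obtain ⟨A, B, hAB⟩ := exists_adj n 0 p q hp' hq' hpq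
  refine ⟨A ++ p :: q :: B, hAB, A.length, ?_, ?_⟩
  · rw [List.getElem?_append_right le_rfl]
    simp
  · rw [List.getElem?_append_right (by omega)]
    have : A.length + 1 - A.length = 1 := by omega
    rw [this]
    simp
end

section
/- For every n ≥ 1 and every level-n expansion list L ∈ Ex(n, 0), the list L has length 2ⁿ, has no repeated entries, and the set of its entries is exactly the dyadic grid Aₙ = {(2m+1)/2ⁿ : m ∈ ℤ, |2m+1| < 2ⁿ}; in particular, every grid point of Aₙ appears exactly once in L. -/
/-- The dyadic grid as a multiset, indexed by `i < 2^n`. -/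
def gridM (n : ℕ) : Multiset ℚ :=
  (Multiset.range (2 ^ n)).map (fun i : ℕ => ((2 * i + 1 : ℚ) - 2 ^ n) / 2 ^ n)

lemma step_multiset {L L' : List ℚ} (h : ExpandStep L L') :
    (L' : Multiset ℚ) = (L : Multiset ℚ).bind (fun x => {(x + 1) / 2, (x - 1) / 2}) := by
  induction h with
  | nil => simp
  | cons_lr x h ih =>
      rw [← Multiset.cons_coe, ← Multiset.cons_coe, ← Multiset.cons_coe,
        Multiset.cons_bind, ih]
      simp [Multiset.insert_eq_cons]
  | cons_rl x h ih =>
      rw [← Multiset.cons_coe, ← Multiset.cons_coe, ← Multiset.cons_coe,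
        Multiset.cons_bind, ih]
      simp [Multiset.insert_eq_cons, Multiset.cons_swap]
      exact List.Perm.swap _ _ _

lemma mrange_add (n m : ℕ) :
    Multiset.range (n + m) = Multiset.range n + (Multiset.range m).map (n + ·) := by
  rw [← Multiset.coe_range, List.range_add, ← Multiset.coe_add, ← Multiset.map_coe,
    Multiset.coe_range, Multiset.coe_range]

lemma grid_bind (n : ℕ) :
    (gridM n).bind (fun x => {(x + 1) / 2, (x - 1) / 2}) = gridM (n + 1) := by
  unfold gridM
  rw [Multiset.bind_map]
  have h2 : (2:ℕ) ^ (n+1) = 2 ^ n + 2 ^ n := by ring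
  rw [h2, mrange_add, Multiset.map_add, Multiset.map_map]
  have hsplit : ∀ s : Multiset ℕ, ∀ f g : ℕ → ℚ,
      (s.bind fun i => ({f i, g i} : Multiset ℚ)) = s.map f + s.map g := by
    intro s f g
    have : (fun i => ({f i, g i} : Multiset ℚ)) = fun i => ({f i} : Multiset ℚ) + {g i} := by
      funext i; simp [Multiset.insert_eq_cons]
    rw [this, Multiset.bind_add, Multiset.bind_singleton, Multiset.bind_singleton]
  rw [hsplit]
  have hne : (2:ℚ) ^ n ≠ 0 := by positivity
  rw [add_comm (Multiset.map _ _)]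
  congr 1
  · apply Multiset.map_congr rfl
    intro i _
    field_simp
    ring
  · apply Multiset.map_congr rfl
    intro i _
    simp only [Function.comp]
    field_simp
    push_cast
    ring

lemma expandN_multiset : ∀ (n : ℕ) (L : List ℚ), ExpandN n [0] L →
    (L : Multiset ℚ) = gridM n := by
  intro n
  induction n with
  | zero =>
      intro L h
      cases h
      norm_num [gridM]
  | succ n ih =>
      intro L h
      cases h with
      | succ h h' => rw [step_multiset h', ih _ h, grid_bind]

/-- **Leaves of the expansion tree (Eq. 16–17).** Every level-`n` expansion list
`L ∈ Ex n 0` (for `n ≥ 1`) has length `2ⁿ`, has no repeated entries, and its set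
of entries is exactly the dyadic grid `Aₙ`; hence every point of `Aₙ` appears
exactly once in `L`. -/
theorem expansion_leaves_are_dyadic_grid :
    ∀ n : ℕ, 1 ≤ n → ∀ L ∈ Ex n 0,
      L.length = 2 ^ n ∧ L.Nodup ∧ (∀ x : ℚ, x ∈ L ↔ x ∈ dyadicGrid n) := by
  intro n hn L hL
  have hM : (L : Multiset ℚ) = gridM n := expandN_multiset n L hL
  have hne : (2:ℚ) ^ n ≠ 0 := by positivity
  have hinj : ∀ i j : ℕ, ((2 * i + 1 : ℚ) - 2 ^ n) / 2 ^ n = ((2 * j + 1 : ℚ) - 2 ^ n) / 2 ^ n → i = j := by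
    intro i j hij
    field_simp at hij
    have hij' : (i : ℚ) = j := by linarith
    exact_mod_cast hij'
  refine ⟨?_, ?_, ?_⟩
  · have := congrArg Multiset.card hM
    simpa [gridM] using this
  · have : (L : Multiset ℚ).Nodup := by
      rw [hM]
      refine Multiset.Nodup.map_on ?_ (Multiset.nodup_range _)
      intro i _ j _ hij
      exact hinj i j hij
    exact this
  · intro x
    have hx : x ∈ L ↔ x ∈ (L : Multiset ℚ) := by simp
    rw [hx, hM]
    unfold gridM
    simp only [Multiset.mem_map, Multiset.mem_range]
    constructor
    · rintro ⟨i, hi, rfl⟩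
      refine ⟨(i : ℤ) - 2 ^ (n - 1), ?_, ?_⟩
      · have hpow : (2:ℤ) * 2 ^ (n-1) = 2 ^ n := by
          rw [← pow_succ']
          congr 1
          omega
        have hi' : (i:ℤ) < 2 ^ n := by exact_mod_cast hi
        have hnn : (0:ℤ) ≤ i := Int.ofNat_nonneg i
        rw [abs_lt]
        constructor <;> nlinarith
      · have hpow : (2:ℚ) * 2 ^ (n-1) = 2 ^ n := by
          rw [← pow_succ']
          congr 1
          omega
        push_cast
        field_simp
        nlinarith [hpow]
    · rintro ⟨m, hm, rfl⟩
      have h1 : -(2:ℤ) ^ n < 2 * m + 1 := (abs_lt.mp hm).1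
      have h2 : 2 * m + 1 < (2:ℤ) ^ n := (abs_lt.mp hm).2
      have hpow : (2:ℤ) * 2 ^ (n-1) = 2 ^ n := by
        rw [← pow_succ']
        congr 1
        omega
      have hge : 0 ≤ m + 2 ^ (n-1) := by nlinarith
      refine ⟨(m + 2 ^ (n-1)).toNat, ?_, ?_⟩
      · have : ((m + 2 ^ (n-1)).toNat : ℤ) < 2 ^ n := by
          rw [Int.toNat_of_nonneg hge]; nlinarith
        exact_mod_cast this
      · have hq : ((m + 2 ^ (n-1)).toNat : ℚ) = (m : ℚ) + 2 ^ (n-1) := by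
          have := Int.toNat_of_nonneg hge
          exact_mod_cast congrArg (fun z : ℤ => (z : ℚ)) this
        rw [hq]
        have hpowq : (2:ℚ) * 2 ^ (n-1) = 2 ^ n := by exact_mod_cast hpow
        field_simp
        nlinarith [hpowq]
end
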